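/- Let (Q,𝔪) be a Noetherian local ring, d ≥ 2 an integer, ζ ∈ Q with ∏_{i=0}^{d-1}(t − ζ^i) = t^d − 1 in Q[t], and f ∈ 𝔪 a nonzerodivisor. Suppose f can be written as f = ∑_{i=1}^N f_{i1} f_{i2} ⋯ f_{id} with N ≥ 2 and all f_{ij} ∈ 𝔪. Then there exists a reduced d-fold matrix factorization (φ_1,…,φ_{d-1},φ_0) of f of rank d^{N-1} such that det φ_k = ± f^{d^{N-2}} for every k ∈ ℤ/d (the sign ε ∈ {1,−1} is independent of k). -/

import Mathlib

open Matrix Polynomial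
open scoped Kronecker

namespace MF

variable {Q : Type*} [CommRing Q]

/-- The cyclic product `φ_k * φ_{k+1} * ⋯ * φ_{k+d-1}`. -/
def cycProd {d : ℕ} {ι : Type*} [Fintype ι] [DecidableEq ι]
    (φ : ZMod d → Matrix ι ι Q) (k : ZMod d) : Matrix ι ι Q :=
  (List.ofFn (fun i : Fin d => φ (k + ((i : ℕ) : ZMod d)))).prod

/-- `φ` is a `d`-fold matrix factorization of `f`. -/
def IsMF (d : ℕ) {ι : Type*} [Fintype ι] [DecidableEq ι] (f : Q)
    (φ : ZMod d → Matrix ι ι Q) : Prop :=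
  ∀ k : ZMod d, cycProd φ k = f • (1 : Matrix ι ι Q)

/-- The `i`-fold shift `T^i X`, given by `(T^i X)_k = φ_{k+i}`. -/
def shift {d : ℕ} {ι : Type*} (i : ZMod d) (φ : ZMod d → Matrix ι ι Q) :
    ZMod d → Matrix ι ι Q :=
  fun k => φ (k + i)

/-- The tensor product `X ⊗_ζ Y` of matrix factorizations. -/
def tensor {d n m : ℕ} (ζ : Q) (φ : ZMod d → Matrix (Fin n) (Fin n) Q)
    (ψ : ZMod d → Matrix (Fin m) (Fin m) Q) :
    ZMod d → Matrix (Fin d × Fin n × Fin m) (Fin d × Fin n × Fin m) Q :=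
  fun k => Matrix.of fun p q =>
    (if q.1 = p.1 then
        ζ ^ (p.1 : ℕ) • ((1 : Matrix (Fin n) (Fin n) Q) ⊗ₖ ψ (k - ((p.1 : ℕ) : ZMod d)))
      else if ((q.1 : ℕ) : ZMod d) = ((p.1 : ℕ) : ZMod d) + 1 then
        φ (((p.1 : ℕ) : ZMod d) + 1) ⊗ₖ (1 : Matrix (Fin m) (Fin m) Q)
      else (0 : Matrix (Fin n × Fin m) (Fin n × Fin m) Q)) p.2 q.2

/-- Isomorphism of `d`-fold matrix factorizations. -/
def Iso {d : ℕ} {ι κ : Type*} [Fintype ι] [Fintype κ] [DecidableEq ι] [DecidableEq κ]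
    (Φ : ZMod d → Matrix ι ι Q) (Ψ : ZMod d → Matrix κ κ Q) : Prop :=
  ∃ (α : ZMod d → Matrix κ ι Q) (β : ZMod d → Matrix ι κ Q),
    (∀ k, α k * β k = 1) ∧ (∀ k, β k * α k = 1) ∧
    (∀ k, α (k - 1) * Φ k = Ψ k * α k)

/-- Direct sum of matrix factorizations. -/
def dsum {d : ℕ} {ι κ : Type*} (φ : ZMod d → Matrix ι ι Q) (ψ : ZMod d → Matrix κ κ Q) :
    ZMod d → Matrix (ι ⊕ κ) (ι ⊕ κ) Q :=
  fun k => Matrix.fromBlocks (φ k) 0 0 (ψ k)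

/-- Direct sum of a finite family of matrix factorizations with the same underlying size. -/
def dsumFam {d t : ℕ} {ι : Type*} (Z : Fin t → (ZMod d → Matrix ι ι Q)) :
    ZMod d → Matrix (Fin t × ι) (Fin t × ι) Q :=
  fun k => Matrix.of fun p q => if p.1 = q.1 then Z p.1 k p.2 q.2 else 0

/-- A matrix factorization (of positive rank) is indecomposable if it is not isomorphic to a
direct sum of two matrix factorizations of positive rank. -/
def Indecomposable (d : ℕ) {ι : Type*} [Fintype ι] [DecidableEq ι] (f : Q)
    (φ : ZMod d → Matrix ι ι Q) : Prop :=
  Nonempty ι ∧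
    ¬ ∃ (n₁ n₂ : ℕ) (ψ₁ : ZMod d → Matrix (Fin n₁) (Fin n₁) Q)
        (ψ₂ : ZMod d → Matrix (Fin n₂) (Fin n₂) Q),
        0 < n₁ ∧ 0 < n₂ ∧ IsMF d f ψ₁ ∧ IsMF d f ψ₂ ∧ Iso φ (dsum ψ₁ ψ₂)

/-- A matrix factorization over a local ring is reduced if all entries of its matrices lie in
the maximal ideal. -/
def Reduced [IsLocalRing Q] {d : ℕ} {ι : Type*} (φ : ZMod d → Matrix ι ι Q) : Prop :=
  ∀ (k : ZMod d) (p q : ι), φ k p q ∈ IsLocalRing.maximalIdeal Q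

/-- A matrix factorization over a local `K`-algebra with residue field `K` is strongly
indecomposable (Definition 5.1). -/
def StronglyIndec (K : Type*) [Field K] [Algebra K Q] [IsLocalRing Q]
    {d : ℕ} {ι : Type*} [Fintype ι] [DecidableEq ι]
    (φ : ZMod d → Matrix ι ι Q) : Prop :=
  (∀ j l : ZMod d, j ≠ l → ∀ α β : Matrix ι ι Q,
      α * φ j = φ l * β →
      (∀ p q, α p q ∈ IsLocalRing.maximalIdeal Q) ∧
      (∀ p q, β p q ∈ IsLocalRing.maximalIdeal Q)) ∧
  (∀ (l : ZMod d) (α β : Matrix ι ι Q),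
      α * φ l = φ l * β →
      ∃ ξ : K, (∀ p q, (α - algebraMap K Q ξ • (1 : Matrix ι ι Q)) p q ∈
                  IsLocalRing.maximalIdeal Q) ∧
               (∀ p q, (β - algebraMap K Q ξ • (1 : Matrix ι ι Q)) p q ∈
                  IsLocalRing.maximalIdeal Q))

end MF

namespace MFaux

open Finset

variable {S : Type*} [CommRing S] {ι : Type*} [Fintype ι] [DecidableEq ι] {d : ℕ}

/-- chain product `D (r-1) * ⋯ * D 0`. -/
def dch (D : ZMod d → Matrix ι ι S) : ℕ → Matrix ι ι S
  | 0 => 1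
  | r + 1 => D (r : ZMod d) * dch D r

def offP (c : ZMod d → S) : Matrix (ι × ZMod d) (ι × ZMod d) S :=
  Matrix.of fun x y => if y.2 = x.2 + 1 ∧ y.1 = x.1 then c x.2 else 0

def cyc (D : ZMod d → Matrix ι ι S) (c : ZMod d → S) : Matrix (ι × ZMod d) (ι × ZMod d) S :=
  blockDiagonal D + offP c

def target (D : ZMod d → Matrix ι ι S) (c : ZMod d → S) : Matrix ι ι S :=
  dch D d + ((-1 : S) ^ (d - 1) * ∏ t ∈ range d, c (t : ZMod d)) • 1

def uMat (D : ZMod d → Matrix ι ι S) (c : ZMod d → S) :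
    Matrix (ι × ZMod d) (ι × ZMod d) S :=
  Matrix.of fun x y =>
    if x.2.val ≤ y.2.val then
      ((-1 : S) ^ (y.2.val - x.2.val) * ∏ t ∈ Ico x.2.val y.2.val, c (t : ZMod d)) *
        dch D x.2.val x.1 y.1
    else 0

def wMat (D : ZMod d → Matrix ι ι S) (c : ZMod d → S) :
    Matrix (ι × ZMod d) (ι × ZMod d) S :=
  Matrix.of fun x y =>
    if x.2.val = d - 1 then
      (if y.2.val = d - 1 then target D c x.1 y.1
       else (c (((d - 1 : ℕ) : ZMod d)) *
          ((-1 : S) ^ y.2.val * ∏ t ∈ range y.2.val, c (t : ZMod d))) *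
          (1 : Matrix ι ι S) x.1 y.1)
    else (if y.2 = x.2 then dch D (x.2.val + 1) x.1 y.1 else 0)

variable [NeZero d]

lemma offP_mul (c : ZMod d → S) (N : Matrix (ι × ZMod d) (ι × ZMod d) S) (x y : ι × ZMod d) :
    (offP (ι := ι) c * N) x y = c x.2 * N (x.1, x.2 + 1) y := by
  rw [Matrix.mul_apply, Finset.sum_eq_single (x.1, x.2 + 1)]
  · simp [offP]
  · intro z _ hz
    have h : ¬(z.2 = x.2 + 1 ∧ z.1 = x.1) := by
      rintro ⟨h1, h2⟩; exact hz (Prod.ext h2 h1)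
    simp [offP, h]
  · simp

lemma bd_mul (D : ZMod d → Matrix ι ι S) (N : Matrix (ι × ZMod d) (ι × ZMod d) S) (x y : ι × ZMod d) :
    (blockDiagonal D * N) x y = ∑ l : ι, D x.2 x.1 l * N (l, x.2) y := by
  rw [Matrix.mul_apply, ← Finset.univ_product_univ, Finset.sum_product]
  refine Finset.sum_congr rfl fun l _ => ?_
  rw [Finset.sum_eq_single x.2]
  · simp [blockDiagonal_apply]
  · intro r _ hr; simp [blockDiagonal_apply, Ne.symm hr]
  · simp

lemma natCast_val_self (p : ZMod d) : ((p.val : ℕ) : ZMod d) = p :=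
  ZMod.natCast_rightInverse p

lemma val_inj' {p q : ZMod d} (h : p.val = q.val) : p = q := by
  rw [← natCast_val_self p, ← natCast_val_self q, h]

lemma val_succ (hd : 2 ≤ d) (p : ZMod d) :
    (p + 1).val = if p.val = d - 1 then 0 else p.val + 1 := by
  have h1 : (1 : ZMod d).val = 1 := by
    rw [show (1 : ZMod d) = ((1 : ℕ) : ZMod d) by push_cast; ring, ZMod.val_natCast,
      Nat.mod_eq_of_lt (by omega)]
  rw [ZMod.val_add, h1]
  have := ZMod.val_lt p
  by_cases h : p.val = d - 1
  · rw [if_pos h, h, show d - 1 + 1 = d by omega, Nat.mod_self]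
  · rw [if_neg h, Nat.mod_eq_of_lt (by omega)]

lemma bd_mul_u (D : ZMod d → Matrix ι ι S) (c : ZMod d → S) (x y : ι × ZMod d) :
    (blockDiagonal D * uMat D c) x y =
      if x.2.val ≤ y.2.val then
        ((-1 : S) ^ (y.2.val - x.2.val) * ∏ t ∈ Ico x.2.val y.2.val, c (t : ZMod d)) *
          dch D (x.2.val + 1) x.1 y.1
      else 0 := by
  rw [bd_mul]
  by_cases h : x.2.val ≤ y.2.val
  · rw [if_pos h]
    have hdch : dch D (x.2.val + 1) = D x.2 * dch D x.2.val := by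
      show D ((x.2.val : ℕ) : ZMod d) * _ = _
      rw [natCast_val_self]
    rw [hdch, Matrix.mul_apply, Finset.mul_sum]
    refine Finset.sum_congr rfl fun l _ => ?_
    simp only [uMat, of_apply, if_pos h]
    ring
  · rw [if_neg h]
    apply Finset.sum_eq_zero
    intro l _
    simp [uMat, of_apply, if_neg h]

theorem cyc_mul_u (hd : 2 ≤ d) (D : ZMod d → Matrix ι ι S) (c : ZMod d → S) :
    cyc D c * uMat D c = wMat D c := by
  have hd1 : d - 1 + 1 = d := by omega
  ext x y
  obtain ⟨i, p⟩ := x; obtain ⟨j, q⟩ := y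
  rw [cyc, add_mul, Matrix.add_apply, offP_mul, bd_mul_u]
  have hpv := ZMod.val_lt p; have hqv := ZMod.val_lt q
  simp only [wMat, of_apply]
  by_cases hp : p.val = d - 1
  · have hp1 : ((p + 1 : ZMod d)).val = 0 := by rw [val_succ hd, if_pos hp]
    have hpc : p = ((d - 1 : ℕ) : ZMod d) := by rw [← natCast_val_self p, hp]
    rw [if_pos hp]
    by_cases hq : q = p
    · subst hq
      rw [if_pos hp, if_pos (le_refl _)]
      simp only [uMat, of_apply, hp1, Nat.zero_le, if_pos, Nat.sub_zero, Ico_self,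
        prod_empty, mul_one, Nat.sub_self, pow_zero, one_mul]
      rw [Nat.Ico_zero_eq_range]
      simp only [target, Matrix.add_apply, Matrix.smul_apply, smul_eq_mul, hp, hd1]
      rw [show dch D 0 = 1 from rfl]
      rw [show range d = range (d - 1 + 1) by rw [hd1], prod_range_succ, ← hpc]
      ring
    · have hq' : ¬ q.val = d - 1 := fun h => hq (val_inj' (h.trans hp.symm))
      rw [if_neg hq']
      rw [if_neg (show ¬ p.val ≤ q.val by omega)]
      simp only [uMat, of_apply, hp1, Nat.zero_le, if_pos, Nat.sub_zero]
      rw [Nat.Ico_zero_eq_range, show dch D 0 = 1 from rfl, ← hpc]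
      ring
  · have hp1 : ((p + 1 : ZMod d)).val = p.val + 1 := by rw [val_succ hd, if_neg hp]
    rw [if_neg hp]
    by_cases hq : q = p
    · subst hq
      rw [if_pos rfl, if_pos (le_refl _)]
      simp only [uMat, of_apply, hp1]
      rw [if_neg (by omega : ¬ q.val + 1 ≤ q.val)]
      simp [Ico_self]
    · rw [if_neg hq]
      rcases lt_trichotomy p.val q.val with h | h | h
      · rw [if_pos (le_of_lt h)]
        simp only [uMat, of_apply, hp1]
        rw [if_pos (by omega : p.val + 1 ≤ q.val)]
        rw [prod_eq_prod_Ico_succ_bot h, natCast_val_self]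
        rw [show q.val - p.val = (q.val - (p.val + 1)) + 1 by omega, pow_succ]
        ring
      · exact absurd (val_inj' h.symm) hq
      · rw [if_neg (by omega : ¬ p.val ≤ q.val)]
        simp only [uMat, of_apply, hp1]
        rw [if_neg (by omega : ¬ p.val + 1 ≤ q.val)]
        ring

lemma det_blockTri [Nonempty ι] (M : Matrix (ι × ZMod d) (ι × ZMod d) S)
    (B : ℕ → Matrix ι ι S)
    (hM : BlockTriangular M fun x : ι × ZMod d => x.2.val)
    (hB : ∀ t, t < d → ∀ i j, M (i, (t : ZMod d)) (j, (t : ZMod d)) = B t i j) :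
    M.det = ∏ t ∈ range d, (B t).det := by
  rw [hM.det]
  have himg : (univ.image fun x : ι × ZMod d => x.2.val) = range d := by
    ext t
    simp only [Finset.mem_image, Finset.mem_range, Finset.mem_univ, true_and]
    constructor
    · rintro ⟨x, rfl⟩; exact ZMod.val_lt _
    · intro ht; exact ⟨(Classical.arbitrary ι, (t : ZMod d)), ZMod.val_cast_of_lt ht⟩
  rw [himg]
  refine Finset.prod_congr rfl fun t ht => ?_
  rw [mem_range] at ht
  let e : ι ≃ {x : ι × ZMod d // x.2.val = t} :=
    { toFun := fun i => ⟨(i, (t : ZMod d)), ZMod.val_cast_of_lt ht⟩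
      invFun := fun x => x.1.1
      left_inv := fun i => rfl
      right_inv := fun x => by
        obtain ⟨⟨i, pp⟩, hx⟩ := x
        apply Subtype.ext
        have : pp = ((t : ℕ) : ZMod d) := by
          rw [← natCast_val_self pp, hx]
        simp [this]
    }
  calc (M.toSquareBlock _ t).det
      = ((M.toSquareBlock _ t).submatrix e e).det := (det_submatrix_equiv_self e _).symm
    _ = (B t).det := by
        congr 1
        ext i j
        show M _ _ = B t i j
        exact hB t ht i j

lemma uMat_triangular (D : ZMod d → Matrix ι ι S) (c : ZMod d → S) :
    BlockTriangular (uMat D c) fun x : ι × ZMod d => x.2.val := by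
  intro x y h
  replace h : y.2.val < x.2.val := h
  simp only [uMat, of_apply]
  rw [if_neg (by omega)]

lemma det_uMat [Nonempty ι] (D : ZMod d → Matrix ι ι S) (c : ZMod d → S) :
    (uMat D c).det = ∏ t ∈ range d, (dch D t).det := by
  apply det_blockTri _ _ (uMat_triangular D c)
  intro t ht i j
  simp only [uMat, of_apply, ZMod.val_cast_of_lt ht, le_refl, if_pos, Nat.sub_self,
    pow_zero, Ico_self, prod_empty, mul_one, one_mul]

lemma det_wMat [Nonempty ι] (hd : 2 ≤ d) (D : ZMod d → Matrix ι ι S) (c : ZMod d → S) :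
    (wMat D c).det = (∏ t ∈ range (d - 1), (dch D (t + 1)).det) * (target D c).det := by
  have hd1 : d - 1 + 1 = d := by omega
  rw [← Matrix.det_transpose]
  rw [det_blockTri ((wMat D c)ᵀ)
    (fun t => if t = d - 1 then (target D c)ᵀ else (dch D (t + 1))ᵀ) ?_ ?_]
  · rw [show range d = range (d - 1 + 1) by rw [hd1], prod_range_succ]
    rw [if_pos rfl, Matrix.det_transpose]
    congr 1
    refine Finset.prod_congr rfl fun t ht => ?_
    rw [mem_range] at ht
    rw [if_neg (by omega), Matrix.det_transpose]
  · intro x y h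
    replace h : y.2.val < x.2.val := h
    have hxv := ZMod.val_lt x.2
    simp only [Matrix.transpose_apply, wMat, of_apply]
    rw [if_neg (by omega : ¬ y.2.val = d - 1)]
    rw [if_neg (fun hc : x.2 = y.2 => by rw [hc] at h; omega)]
  · intro t ht i j
    simp only [Matrix.transpose_apply, wMat, of_apply, ZMod.val_cast_of_lt ht]
    by_cases h : t = d - 1
    · rw [if_pos h, if_pos h, if_pos h]
      rfl
    · rw [if_neg h, if_neg h]; simp

theorem det_cyc_mul (hd : 2 ≤ d) [Nonempty ι] (D : ZMod d → Matrix ι ι S) (c : ZMod d → S) :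
    (cyc D c).det * ∏ t ∈ range (d - 1), (dch D (t + 1)).det
      = (target D c).det * ∏ t ∈ range (d - 1), (dch D (t + 1)).det := by
  have hd1 : d - 1 + 1 = d := by omega
  have h := congrArg Matrix.det (cyc_mul_u hd D c)
  rw [Matrix.det_mul, det_uMat, det_wMat hd] at h
  have hU : ∏ t ∈ range d, (dch D t).det = ∏ t ∈ range (d - 1), (dch D (t + 1)).det := by
    rw [show range d = range (d - 1 + 1) by rw [hd1], Finset.prod_range_succ']
    simp [show dch D 0 = (1 : Matrix ι ι S) from rfl]
  rw [hU] at h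
  rw [h, mul_comm]

/-! ### The determinant identity, via the generic-shift trick -/

noncomputable def Dx (D : ZMod d → Matrix ι ι S) : ZMod d → Matrix ι ι S[X] :=
  fun p => (X : S[X]) • 1 + (D p).map C

lemma det_Dx_monic (D : ZMod d → Matrix ι ι S) (p : ZMod d) : ((Dx D p).det).Monic := by
  have h : Dx D p = charmatrix (-(D p)) := by
    rw [charmatrix, map_neg, Matrix.scalar_apply, ← Matrix.smul_one_eq_diagonal]
    rw [Dx, RingHom.mapMatrix_apply, sub_neg_eq_add]
  rw [h]
  exact Matrix.charpoly_monic _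

lemma det_dch_Dx_monic (D : ZMod d → Matrix ι ι S) : ∀ r, ((dch (Dx D) r).det).Monic
  | 0 => by
      rw [show dch (Dx D) 0 = 1 from rfl, Matrix.det_one]
      exact monic_one
  | r + 1 => by
      rw [show dch (Dx D) (r + 1) = Dx D r * dch (Dx D) r from rfl, Matrix.det_mul]
      exact (det_Dx_monic D _).mul (det_dch_Dx_monic D r)

lemma map_Dx (D : ZMod d → Matrix ι ι S) (p : ZMod d) :
    (Dx D p).map (evalRingHom (0 : S)) = D p := by
  ext i j
  simp only [Dx, Matrix.map_apply, Matrix.add_apply, Matrix.smul_apply, smul_eq_mul,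
    coe_evalRingHom, eval_add, eval_mul, eval_X, zero_mul, zero_add]
  simp

lemma map_dch (D : ZMod d → Matrix ι ι S) :
    ∀ r, (dch (Dx D) r).map (evalRingHom (0 : S)) = dch D r
  | 0 => by
      rw [show dch (Dx D) 0 = 1 from rfl, show dch D 0 = 1 from rfl]
      exact Matrix.map_one _ (map_zero _) (map_one _)
  | r + 1 => by
      rw [show dch (Dx D) (r + 1) = Dx D r * dch (Dx D) r from rfl,
        show dch D (r + 1) = D (r : ZMod d) * dch D r from rfl,
        Matrix.map_mul (f := evalRingHom (0 : S)), map_dch D r, map_Dx D _]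

lemma map_cyc (D : ZMod d → Matrix ι ι S) (c : ZMod d → S) :
    (cyc (Dx D) (fun p => C (c p))).map (evalRingHom (0 : S)) = cyc D c := by
  ext x y
  simp only [cyc, Matrix.map_apply, Matrix.add_apply, blockDiagonal_apply, offP, of_apply]
  rw [map_add]
  congr 1
  · split
    · have h := map_Dx D x.2
      calc (evalRingHom (0 : S)) (Dx D x.2 x.1 y.1)
          = ((Dx D x.2).map (evalRingHom (0 : S))) x.1 y.1 := rfl
        _ = D x.2 x.1 y.1 := by rw [h]
    · exact map_zero _
  · split
    · exact eval_C
    · exact map_zero _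

lemma map_target (D : ZMod d → Matrix ι ι S) (c : ZMod d → S) :
    (target (Dx D) (fun p => C (c p))).map (evalRingHom (0 : S)) = target D c := by
  ext i j
  have h1 : (evalRingHom (0 : S)) (dch (Dx D) d i j) = dch D d i j := by
    calc (evalRingHom (0 : S)) (dch (Dx D) d i j)
        = ((dch (Dx D) d).map (evalRingHom (0 : S))) i j := rfl
      _ = dch D d i j := by rw [map_dch]
  rw [coe_evalRingHom] at h1
  simp only [target, Matrix.map_apply, Matrix.add_apply, Matrix.smul_apply, smul_eq_mul,
    coe_evalRingHom, eval_add, eval_mul, eval_pow, eval_neg, eval_one, eval_prod, eval_C,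
    Matrix.one_apply, apply_ite (eval (0 : S)), eval_zero]
  rw [show eval 0 (dch (Dx D) d i j) = dch D d i j from h1]

theorem det_cyc [Nonempty ι] (hd : 2 ≤ d) (D : ZMod d → Matrix ι ι S) (c : ZMod d → S) :
    (cyc D c).det = (target D c).det := by
  have key := det_cyc_mul (S := S[X]) hd (Dx D) (fun p => C (c p))
  have hreg : IsRegular (∏ t ∈ range (d - 1), (dch (Dx D) (t + 1)).det) :=
    (monic_prod_of_monic _ _ fun t _ => det_dch_Dx_monic D (t + 1)).isRegular
  have h2 : (cyc (Dx D) fun p => C (c p)).det = (target (Dx D) fun p => C (c p)).det :=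
    hreg.right key
  have h3 := congrArg (evalRingHom (0 : S)) h2
  rwa [RingHom.map_det, RingHom.map_det, RingHom.mapMatrix_apply, RingHom.mapMatrix_apply,
    map_cyc, map_target] at h3

section PartB
variable {Q : Type*} [CommRing Q]

/-- Elementary symmetric functions of `1, ζ, …, ζ^(r-1)`. -/
def Ee (ζ : Q) : ℕ → ℕ → Q
  | 0, 0 => 1
  | 0, _ + 1 => 0
  | r + 1, 0 => Ee ζ r 0
  | r + 1, j + 1 => Ee ζ r (j + 1) + ζ ^ r * Ee ζ r j

/-- "Gaussian binomial" coefficients. -/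
def gam (ζ : Q) : ℕ → ℕ → Q
  | 0, 0 => 1
  | 0, _ + 1 => 0
  | r + 1, 0 => gam ζ r 0
  | r + 1, j + 1 => ζ ^ (j + 1) * gam ζ r (j + 1) + gam ζ r j

lemma Ee_zero (ζ : Q) : ∀ r, Ee ζ r 0 = 1
  | 0 => rfl
  | r + 1 => by rw [Ee, Ee_zero ζ r]

lemma Ee_gt (ζ : Q) : ∀ r j, r < j → Ee ζ r j = 0
  | 0, j + 1, _ => rfl
  | r + 1, j + 1, h => by
      rw [Ee, Ee_gt ζ r (j + 1) (by omega), Ee_gt ζ r j (by omega), mul_zero, add_zero]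

lemma gam_zero (ζ : Q) : ∀ r, gam ζ r 0 = 1
  | 0 => rfl
  | r + 1 => by rw [gam, gam_zero ζ r]

lemma gam_gt (ζ : Q) : ∀ r j, r < j → gam ζ r j = 0
  | 0, j + 1, _ => rfl
  | r + 1, j + 1, h => by
      rw [gam, gam_gt ζ r (j + 1) (by omega), gam_gt ζ r j (by omega), mul_zero, zero_add]

lemma gam_diag (ζ : Q) : ∀ r, gam ζ r r = 1
  | 0 => rfl
  | r + 1 => by rw [gam, gam_gt ζ r (r + 1) (by omega), mul_zero, zero_add, gam_diag ζ r]

lemma Ee_diag (ζ : Q) : ∀ r, Ee ζ r r = ∏ t ∈ range r, ζ ^ t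
  | 0 => by simp [Ee]
  | r + 1 => by
      rw [Ee, Ee_gt ζ r (r + 1) (by omega), zero_add, Ee_diag ζ r, prod_range_succ, mul_comm]

/-- The second Pascal rule for `Ee`. -/
lemma Ee_pascal2 (ζ : Q) : ∀ r j, Ee ζ (r + 1) (j + 1)
    = ζ ^ (j + 1) * Ee ζ r (j + 1) + ζ ^ j * Ee ζ r j := by
  intro r
  induction r with
  | zero =>
      intro j
      match j with
      | 0 => simp [Ee]
      | j + 1 => simp [Ee, Ee_gt ζ 0 (j + 1) (by omega), Ee_gt ζ 0 (j + 2) (by omega)]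
  | succ r ih =>
      intro j
      match j with
      | 0 =>
          show Ee ζ (r + 1 + 1) 1 = ζ ^ 1 * Ee ζ (r + 1) 1 + ζ ^ 0 * Ee ζ (r + 1) 0
          conv_rhs => rw [show Ee ζ (r + 1) 1 = Ee ζ r 1 + ζ ^ r * Ee ζ r 0 from rfl]
          rw [show Ee ζ (r + 1 + 1) 1 = Ee ζ (r + 1) 1 + ζ ^ (r + 1) * Ee ζ (r + 1) 0 from rfl,
            show Ee ζ (r + 1) 1 = ζ ^ 1 * Ee ζ r 1 + ζ ^ 0 * Ee ζ r 0 from ih 0]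
          simp only [Ee_zero]
          ring
      | j + 1 =>
          show Ee ζ (r + 1 + 1) (j + 1 + 1)
              = ζ ^ (j + 1 + 1) * Ee ζ (r + 1) (j + 1 + 1) + ζ ^ (j + 1) * Ee ζ (r + 1) (j + 1)
          conv_rhs =>
            rw [show Ee ζ (r + 1) (j + 1 + 1) = Ee ζ r (j + 1 + 1) + ζ ^ r * Ee ζ r (j + 1) from rfl,
              show Ee ζ (r + 1) (j + 1) = Ee ζ r (j + 1) + ζ ^ r * Ee ζ r j from rfl]
          rw [show Ee ζ (r + 1 + 1) (j + 1 + 1)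
              = Ee ζ (r + 1) (j + 1 + 1) + ζ ^ (r + 1) * Ee ζ (r + 1) (j + 1) from rfl,
            ih (j + 1), ih j]
          ring

/-- Bridge between `gam` and `Ee`. -/
lemma gam_Ee (ζ : Q) : ∀ r j, ζ ^ (range j).sum id * gam ζ r j = Ee ζ r j := by
  intro r
  induction r with
  | zero =>
      intro j
      match j with
      | 0 => simp [gam, Ee]
      | j + 1 => simp [gam, Ee]
  | succ r ih =>
      intro j
      match j with
      | 0 => simp [gam_zero, Ee_zero]
      | j + 1 =>
          rw [show gam ζ (r + 1) (j + 1) = ζ ^ (j + 1) * gam ζ r (j + 1) + gam ζ r j from rfl,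
            Ee_pascal2, ← ih (j + 1), ← ih j,
            show (range (j + 1)).sum id = (range j).sum id + j by
              rw [Finset.sum_range_succ]; rfl]
          ring

section zeta

variable {d : ℕ} (hd : 2 ≤ d) {ζ : Q}
  (hζ : ∏ i ∈ range d, (X - C (ζ ^ i)) = X ^ d - 1)

include hd hζ

lemma zeta_pow_d : ζ ^ d = 1 := by
  have h := congrArg (eval ζ) hζ
  rw [eval_prod] at h
  rw [Finset.prod_eq_zero (Finset.mem_range.2 (by omega : 1 < d))
    (by simp : eval ζ (X - C (ζ ^ 1)) = 0)] at h
  simp only [eval_sub, eval_pow, eval_X, eval_one] at h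
  linear_combination -h

lemma rho_eq : ∏ i ∈ range d, (X + C (ζ ^ i)) = X ^ d - C ((-1 : Q) ^ d) := by
  have h := congrArg (fun p => Polynomial.comp p (-X)) hζ
  rw [Polynomial.prod_comp] at h
  have h2 : ∀ i ∈ range d, (X - C (ζ ^ i)).comp (-X) = (-1) * (X + C (ζ ^ i)) := by
    intro i _
    rw [sub_comp, X_comp, C_comp]
    ring
  rw [Finset.prod_congr rfl h2, Finset.prod_mul_distrib, Finset.prod_const,
    Finset.card_range, sub_comp, pow_comp, X_comp, one_comp] at h
  have h4 : ((-1 : Q[X]) ^ d) * ((-1 : Q[X]) ^ d) = 1 := by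
    rw [← pow_add, show d + d = 2 * d by ring, pow_mul]
    norm_num
  have h3 := congrArg (fun p => ((-1 : Q[X]) ^ d) * p) h
  rw [← mul_assoc, h4, one_mul, neg_pow (X : Q[X]) d, mul_sub, ← mul_assoc, h4, one_mul, mul_one] at h3
  rw [h3]
  congr 1
  rw [map_pow]
  norm_num

lemma rho_coeff : ∀ r j, (∏ i ∈ range r, (X + C (ζ ^ i))).coeff j
    = if j ≤ r then Ee ζ r (r - j) else 0 := by
  intro r
  induction r with
  | zero =>
      intro j
      match j with
      | 0 => simp [Ee]
      | j + 1 => simp [Polynomial.coeff_one]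
  | succ r ih =>
      intro j
      rw [prod_range_succ, mul_add, coeff_add, coeff_mul_C]
      match j with
      | 0 =>
          rw [coeff_mul_X_zero, zero_add, ih 0]
          rw [if_pos (Nat.zero_le r), if_pos (Nat.zero_le (r + 1)), Nat.sub_zero, Nat.sub_zero]
          rw [show Ee ζ (r + 1) (r + 1) = Ee ζ r (r + 1) + ζ ^ r * Ee ζ r r from rfl,
            Ee_gt ζ r (r + 1) (by omega)]
          ring
      | j + 1 =>
          rw [coeff_mul_X, ih j, ih (j + 1)]
          by_cases h1 : j + 1 ≤ r
          · rw [if_pos (by omega : j ≤ r), if_pos h1, if_pos (by omega : j + 1 ≤ r + 1)]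
            have hr2 : r + 1 - (j + 1) = r - (j + 1) + 1 := by omega
            have hr : r - j = r - (j + 1) + 1 := by omega
            rw [hr2, hr,
              show Ee ζ (r + 1) (r - (j + 1) + 1)
                = Ee ζ r (r - (j + 1) + 1) + ζ ^ r * Ee ζ r (r - (j + 1)) from rfl]
            ring
          · by_cases h2 : j ≤ r
            · have hjr : j = r := by omega
              subst hjr
              rw [if_pos le_rfl, if_neg h1, if_pos (by omega), Nat.sub_self,
                show j + 1 - (j + 1) = 0 by omega, Ee_zero, Ee_zero]
              ring
            · rw [if_neg h2, if_neg h1, if_neg (by omega)]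
              ring

lemma Ee_vanish (j : ℕ) (h0 : 0 < j) (hjd : j < d) : Ee ζ d j = 0 := by
  have h := rho_coeff (ζ := ζ) hd hζ d (d - j)
  rw [rho_eq hd hζ, if_pos (by omega : d - j ≤ d), show d - (d - j) = j by omega] at h
  rw [← h, coeff_sub, coeff_X_pow, coeff_C, if_neg (by omega), if_neg (by omega)]
  ring

lemma Ee_dd_eq : Ee ζ d d = -(-1 : Q) ^ d := by
  have h := rho_coeff (ζ := ζ) hd hζ d 0
  rw [rho_eq hd hζ, if_pos (Nat.zero_le d), Nat.sub_zero] at h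
  rw [← h, coeff_sub, coeff_X_pow, coeff_C, if_neg (by omega), if_pos rfl]
  ring

lemma zeta_pow_prod : (∏ t ∈ range d, ζ ^ t) = -(-1 : Q) ^ d := by
  rw [← Ee_diag, Ee_dd_eq hd hζ]

lemma zeta_unit : IsUnit ζ := by
  have h : ζ * ζ ^ (d - 1) = 1 := by
    rw [← pow_succ', show d - 1 + 1 = d by omega]
    exact zeta_pow_d hd hζ
  exact IsUnit.of_mul_eq_one _ h

lemma gam_vanish (j : ℕ) (h0 : 0 < j) (hjd : j < d) : gam ζ d j = 0 := by
  have h := gam_Ee ζ d j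
  rw [Ee_vanish hd hζ j h0 hjd] at h
  have hu : IsUnit (ζ ^ (range j).sum id) := (zeta_unit hd hζ).pow _
  exact (IsUnit.mul_right_eq_zero hu).1 h

lemma zeta_pow_mod (n : ℕ) : ζ ^ (n % d) = ζ ^ n := by
  conv_rhs => rw [← Nat.mod_add_div n d, pow_add, pow_mul, zeta_pow_d hd hζ, one_pow, mul_one]

end zeta

end PartB

section PartC

variable {Q : Type*} [CommRing Q] {d : ℕ} [NeZero d] {ι : Type*} [Fintype ι] [DecidableEq ι]

/-- The ordered product `Φ k * Φ (k+1) * ⋯ * Φ (k+r-1)`. -/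
def listP (Φ : ZMod d → Matrix ι ι Q) : ℕ → ZMod d → Matrix ι ι Q
  | 0, _ => 1
  | r + 1, k => listP Φ r k * Φ (k + (r : ℕ))

lemma listP_left (Φ : ZMod d → Matrix ι ι Q) :
    ∀ r k, listP Φ (r + 1) k = Φ k * listP Φ r (k + 1)
  | 0, k => by
      show listP Φ 0 k * Φ (k + ((0 : ℕ) : ZMod d)) = Φ k * listP Φ 0 (k + 1)
      show (1 : Matrix ι ι Q) * Φ (k + ((0 : ℕ) : ZMod d)) = Φ k * 1
      rw [one_mul, mul_one, Nat.cast_zero, add_zero]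
  | r + 1, k => by
      show listP Φ (r + 1) k * Φ (k + ((r + 1 : ℕ) : ZMod d)) = Φ k * listP Φ (r + 1) (k + 1)
      rw [listP_left Φ r k, mul_assoc,
        show listP Φ (r + 1) (k + 1) = listP Φ r (k + 1) * Φ ((k + 1) + (r : ℕ)) from rfl,
        show k + ((r + 1 : ℕ) : ZMod d) = (k + 1) + (r : ℕ) by push_cast; ring]

lemma bd_mul_offP (f : ZMod d → Matrix ι ι Q) (c0 : ZMod d → Q) (x y : ι × ZMod d) :
    (blockDiagonal f * offP (ι := ι) c0) x y
      = if y.2 = x.2 + 1 then f x.2 x.1 y.1 * c0 x.2 else 0 := by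
  rw [bd_mul, Finset.sum_eq_single y.1]
  · simp only [offP, of_apply]
    by_cases h : y.2 = x.2 + 1
    · simp [h]
    · simp [h]
  · intro l _ hl
    simp only [offP, of_apply]
    rw [if_neg (fun hc => hl hc.2.symm), mul_zero]
  · simp

lemma offP_mul_bd (c0 : ZMod d → Q) (f : ZMod d → Matrix ι ι Q) (x y : ι × ZMod d) :
    (offP (ι := ι) c0 * blockDiagonal f) x y
      = if y.2 = x.2 + 1 then c0 x.2 * f (x.2 + 1) x.1 y.1 else 0 := by
  rw [offP_mul, blockDiagonal_apply]
  dsimp only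
  by_cases h : y.2 = x.2 + 1
  · rw [if_pos h.symm, if_pos h]
  · rw [if_neg (fun hc => h hc.symm), if_neg h, mul_zero]

lemma shiftL (c0 : ZMod d → Q) (f : ZMod d → Matrix ι ι Q) :
    offP (ι := ι) c0 * blockDiagonal f = blockDiagonal (fun p => f (p + 1)) * offP c0 := by
  ext x y
  rw [offP_mul_bd, bd_mul_offP]
  split
  · ring
  · rfl

lemma smul_blockDiagonal (x : Q) (f : ZMod d → Matrix ι ι Q) :
    blockDiagonal (fun p => x • f p) = x • blockDiagonal f := by
  ext ⟨i, p⟩ ⟨j, q⟩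
  simp only [blockDiagonal_apply, Matrix.smul_apply, smul_eq_mul]
  split
  · rfl
  · rw [mul_zero]

variable (ζ : Q) (ψ : ZMod d → Matrix ι ι Q) (a : ZMod d → Q)

/-- the diagonal blocks -/
def Dl (k : ZMod d) : ZMod d → Matrix ι ι Q := fun p => ζ ^ p.val • ψ (k - p)

def Dm (k : ZMod d) : Matrix (ι × ZMod d) (ι × ZMod d) Q := blockDiagonal (Dl ζ ψ k)

def Am : Matrix (ι × ZMod d) (ι × ZMod d) Q := offP (fun p => a (p + 1))

def Tm (k : ZMod d) : Matrix (ι × ZMod d) (ι × ZMod d) Q := Dm ζ ψ k + Am a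

def Dpr (r : ℕ) (k : ZMod d) : Matrix (ι × ZMod d) (ι × ZMod d) Q :=
  blockDiagonal (fun p => (ζ ^ p.val) ^ r • listP ψ r (k - p))

section withzeta

variable {ζ ψ a} (hd : 2 ≤ d) (hζ : ∏ i ∈ range d, (X - C (ζ ^ i)) = X ^ d - 1)
include hd hζ

lemma zeta_val_succ (p : ZMod d) : ζ ^ ((p + 1 : ZMod d)).val = ζ * ζ ^ p.val := by
  rw [val_succ hd p]
  by_cases h : p.val = d - 1
  · rw [if_pos h, pow_zero, h, ← pow_succ', show d - 1 + 1 = d by omega, zeta_pow_d hd hζ]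
  · rw [if_neg h, pow_succ']

lemma am_dm (k : ZMod d) : Am (ι := ι) a * Dm ζ ψ k = ζ • (Dm ζ ψ (k - 1) * Am a) := by
  rw [Am, Dm, Dm, shiftL]
  have h : (fun p => Dl ζ ψ k (p + 1)) = fun p => ζ • Dl ζ ψ (k - 1) p := by
    funext p
    simp only [Dl]
    rw [zeta_val_succ hd hζ, ← smul_smul, show k - (p + 1) = k - 1 - p by ring]
  rw [h, smul_blockDiagonal, smul_mul_assoc]

lemma am_pow_dm (j : ℕ) (k : ZMod d) : (Am (ι := ι) a) ^ j * Dm ζ ψ k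
    = (ζ ^ j) • (Dm ζ ψ (k - (j : ℕ)) * (Am a) ^ j) := by
  induction j generalizing k with
  | zero => simp
  | succ j ih =>
      rw [pow_succ, mul_assoc, am_dm hd hζ, mul_smul_comm, ← mul_assoc, ih (k - 1),
        smul_mul_assoc, smul_smul, mul_assoc, ← pow_succ, ← pow_succ',
        show k - 1 - (j : ℕ) = k - ((j + 1 : ℕ) : ZMod d) by push_cast; ring]

lemma dm_prod : ∀ (r : ℕ) (k : ZMod d), listP (Dm ζ ψ) r k = Dpr ζ ψ r k
  | 0, k => by
      show (1 : Matrix (ι × ZMod d) (ι × ZMod d) Q) = _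
      rw [Dpr]
      have h : (fun p : ZMod d => (ζ ^ p.val) ^ 0 • listP ψ 0 (k - p))
          = (1 : ZMod d → Matrix ι ι Q) := by
        funext p
        rw [pow_zero, one_smul]
        rfl
      rw [h, blockDiagonal_one]
  | r + 1, k => by
      show listP (Dm ζ ψ) r k * Dm ζ ψ (k + (r : ℕ)) = _
      rw [dm_prod r k, Dpr, Dpr, Dm, ← blockDiagonal_mul]
      have hf : ∀ p : ZMod d,
          ((ζ ^ p.val) ^ r • listP ψ r (k - p)) * Dl ζ ψ (k + (r : ℕ)) p
          = (ζ ^ p.val) ^ (r + 1) • listP ψ (r + 1) (k - p) := by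
        intro p
        simp only [Dl]
        rw [smul_mul_assoc, mul_smul_comm, smul_smul, ← pow_succ,
          show k + (r : ℕ) - p = (k - p) + (r : ℕ) by ring]
        rfl
      exact congrArg _ (funext hf)

lemma dpr_succ (s : ℕ) (k : ZMod d) :
    Dpr (ι := ι) ζ ψ (s + 1) k = Dpr ζ ψ s k * Dm ζ ψ (k + (s : ℕ)) := by
  rw [← dm_prod hd hζ, ← dm_prod hd hζ]
  rfl

theorem expandT : ∀ (r : ℕ) (k : ZMod d), listP (Tm ζ ψ a) r k
    = ∑ j ∈ range (r + 1), gam ζ r j • (Dpr ζ ψ (r - j) k * (Am (ι := ι) a) ^ j) := by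
  intro r
  induction r with
  | zero =>
      intro k
      rw [Finset.range_one, Finset.sum_singleton]
      show (1 : Matrix (ι × ZMod d) (ι × ZMod d) Q)
        = gam ζ 0 0 • (Dpr ζ ψ 0 k * (Am a) ^ 0)
      rw [gam_zero, pow_zero, mul_one, one_smul, ← dm_prod hd hζ]
      rfl
  | succ r ih =>
      intro k
      rw [show listP (Tm ζ ψ a) (r + 1) k
          = listP (Tm ζ ψ a) r k * Tm ζ ψ a (k + (r : ℕ)) from rfl, ih, Finset.sum_mul]
      have hterm : ∀ j ∈ range (r + 1),
          (gam ζ r j • (Dpr ζ ψ (r - j) k * (Am (ι := ι) a) ^ j)) * Tm ζ ψ a (k + (r : ℕ))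
          = (ζ ^ j * gam ζ r j) • (Dpr ζ ψ ((r - j) + 1) k * (Am a) ^ j)
            + gam ζ r j • (Dpr ζ ψ (r - j) k * (Am a) ^ (j + 1)) := by
        intro j hj
        rw [mem_range] at hj
        rw [Tm, mul_add, smul_mul_assoc]
        congr 1
        · rw [mul_assoc, am_pow_dm hd hζ j (k + (r : ℕ)), mul_smul_comm, smul_smul,
            mul_comm (gam ζ r j) (ζ ^ j), ← mul_assoc,
            show k + (r : ℕ) - (j : ℕ) = k + ((r - j : ℕ) : ZMod d) by
              rw [Nat.cast_sub (by omega : j ≤ r)]; ring,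
            ← dpr_succ hd hζ]
        · rw [smul_mul_assoc, mul_assoc, ← pow_succ]
      rw [Finset.sum_congr rfl hterm, Finset.sum_add_distrib]
      have hgam : ∀ j, gam ζ (r + 1) j
          = ζ ^ j * gam ζ r j + (if j = 0 then 0 else gam ζ r (j - 1)) := by
        intro j
        match j with
        | 0 => rw [if_pos rfl, add_zero, pow_zero, one_mul]; rfl
        | j + 1 => rw [if_neg (by omega)]; rfl
      have hsplit : ∀ j ∈ range (r + 1 + 1),
          gam ζ (r + 1) j • (Dpr ζ ψ (r + 1 - j) k * (Am (ι := ι) a) ^ j)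
          = (ζ ^ j * gam ζ r j) • (Dpr ζ ψ (r + 1 - j) k * (Am a) ^ j)
            + (if j = 0 then 0 else gam ζ r (j - 1)) •
                (Dpr ζ ψ (r + 1 - j) k * (Am a) ^ j) := by
        intro j _
        rw [hgam j, add_smul]
      rw [Finset.sum_congr rfl hsplit, Finset.sum_add_distrib]
      congr 1
      · conv_rhs => rw [Finset.sum_range_succ]
        rw [gam_gt ζ r (r + 1) (by omega), mul_zero, zero_smul, add_zero]
        refine Finset.sum_congr rfl fun j hj => ?_
        rw [mem_range] at hj
        rw [show r + 1 - j = r - j + 1 by omega]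
      · conv_rhs => rw [Finset.sum_range_succ']
        rw [if_pos rfl, zero_smul, add_zero]
        refine Finset.sum_congr rfl fun j hj => ?_
        rw [if_neg (by omega), Nat.add_sub_cancel,
          show r + 1 - (j + 1) = r - j by omega]

end withzeta

lemma prod_shift (a : ZMod d → Q) (b : ZMod d) :
    ∏ t ∈ range d, a (b + (t : ℕ)) = ∏ z : ZMod d, a z := by
  rw [← Fin.prod_univ_eq_prod_range (fun t => a (b + (t : ℕ))) d]
  apply Fintype.prod_bijective (fun i : Fin d => b + ((i : ℕ) : ZMod d)) ?_ _ _ (fun i => rfl)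
  constructor
  · intro i j hij
    have h2 : ((i : ℕ) : ZMod d) = ((j : ℕ) : ZMod d) := add_left_cancel hij
    apply Fin.ext
    have h3 := congrArg ZMod.val h2
    rwa [ZMod.val_cast_of_lt i.isLt, ZMod.val_cast_of_lt j.isLt] at h3
  · intro z
    refine ⟨⟨(z - b).val, ZMod.val_lt _⟩, ?_⟩
    show b + (((z - b).val : ℕ) : ZMod d) = z
    rw [natCast_val_self]
    ring

lemma am_pow (a : ZMod d → Q) : ∀ r : ℕ, (Am (ι := ι) a) ^ r
    = Matrix.of (fun x y : ι × ZMod d =>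
        if y.2 = x.2 + (r : ℕ) ∧ y.1 = x.1 then ∏ t ∈ range r, a (x.2 + 1 + (t : ℕ)) else 0)
  | 0 => by
      rw [pow_zero]
      ext x y
      simp only [Matrix.one_apply, of_apply, Nat.cast_zero, add_zero, range_zero, prod_empty]
      by_cases h : x = y
      · subst h
        rw [if_pos rfl, if_pos ⟨rfl, rfl⟩]
      · rw [if_neg h, if_neg (fun hc => h (Prod.ext hc.2.symm hc.1.symm))]
  | r + 1 => by
      rw [pow_succ, am_pow a r]
      ext x y
      rw [Matrix.mul_apply, Finset.sum_eq_single (x.1, x.2 + (r : ℕ))]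
      · simp only [of_apply, Am, offP]
        rw [if_pos (⟨trivial, trivial⟩ : True ∧ True)]
        rw [show ((r + 1 : ℕ) : ZMod d) = ((r : ℕ) : ZMod d) + 1 by push_cast; ring, ← add_assoc]
        by_cases h : y.2 = x.2 + (r : ℕ) + 1 ∧ y.1 = x.1
        · rw [if_pos h, if_pos h, prod_range_succ,
            show x.2 + 1 + (r : ℕ) = x.2 + (r : ℕ) + 1 by ring]
        · rw [if_neg h, if_neg h, mul_zero]
      · intro z _ hz
        simp only [of_apply]
        rw [if_neg (fun hc => hz (Prod.ext hc.2 hc.1)), zero_mul]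
      · simp

lemma am_pow_d (a : ZMod d → Q) :
    (Am (ι := ι) a) ^ d = (∏ z : ZMod d, a z) • (1 : Matrix (ι × ZMod d) (ι × ZMod d) Q) := by
  rw [am_pow]
  ext x y
  simp only [of_apply, Matrix.smul_apply, Matrix.one_apply, smul_eq_mul, ZMod.natCast_self,
    add_zero]
  by_cases h : y.2 = x.2 ∧ y.1 = x.1
  · rw [if_pos h, if_pos (Prod.ext h.2 h.1).symm, mul_one]
    exact prod_shift a (x.2 + 1)
  · rw [if_neg h, if_neg (fun hc : x = y => h ⟨by rw [hc], by rw [hc]⟩), mul_zero]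

section withzeta2

variable {ζ : Q} {ψ : ZMod d → Matrix ι ι Q} {a : ZMod d → Q}
  (hd : 2 ≤ d) (hζ : ∏ i ∈ range d, (X - C (ζ ^ i)) = X ^ d - 1)
include hd hζ

lemma dpr_zero (k : ZMod d) : Dpr (ι := ι) ζ ψ 0 k = 1 := (dm_prod hd hζ 0 k).symm

lemma dpr_d (h0 : Q) (hpsi : ∀ k', listP ψ d k' = h0 • 1) (k : ZMod d) :
    Dpr (ι := ι) ζ ψ d k = h0 • 1 := by
  rw [Dpr]
  have hf : (fun p : ZMod d => (ζ ^ p.val) ^ d • listP ψ d (k - p))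
      = fun _ : ZMod d => h0 • (1 : Matrix ι ι Q) := by
    funext p
    rw [hpsi, ← pow_mul, mul_comm p.val d, pow_mul, zeta_pow_d hd hζ, one_pow, one_smul]
  rw [hf]
  have h2 : blockDiagonal (fun _ : ZMod d => h0 • (1 : Matrix ι ι Q))
      = h0 • blockDiagonal (fun _ : ZMod d => (1 : Matrix ι ι Q)) :=
    smul_blockDiagonal h0 _
  rw [h2, show (fun _ : ZMod d => (1 : Matrix ι ι Q)) = 1 from rfl, blockDiagonal_one]

theorem cycT (h0 : Q) (hpsi : ∀ k', listP ψ d k' = h0 • 1) (k : ZMod d) :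
    listP (Tm ζ ψ a) d k
      = ((∏ z : ZMod d, a z) + h0) • (1 : Matrix (ι × ZMod d) (ι × ZMod d) Q) := by
  rw [expandT hd hζ d k, Finset.sum_range_succ]
  rw [show ∑ j ∈ range d, gam ζ d j • (Dpr ζ ψ (d - j) k * (Am (ι := ι) a) ^ j)
      = gam ζ d 0 • (Dpr ζ ψ (d - 0) k * (Am (ι := ι) a) ^ 0) from
    Finset.sum_eq_single 0
      (fun j hj hj0 => by
        rw [gam_vanish hd hζ j (by omega) (mem_range.1 hj), zero_smul])
      (fun hno => absurd (mem_range.2 (by omega : (0 : ℕ) < d)) hno)]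
  rw [gam_zero, gam_diag, Nat.sub_self, Nat.sub_zero, pow_zero, mul_one, one_smul, one_smul,
    dpr_d hd hζ h0 hpsi k, dpr_zero hd hζ, one_mul, am_pow_d, add_smul]
  exact add_comm _ _

lemma dch_dl (k : ZMod d) : ∀ r : ℕ,
    dch (Dl ζ ψ k) r = (∏ t ∈ range r, ζ ^ t) • listP ψ r (k + 1 - (r : ℕ))
  | 0 => by
      show (1 : Matrix ι ι Q) = _
      rw [range_zero, prod_empty, one_smul]
      rfl
  | r + 1 => by
      show Dl ζ ψ k ((r : ℕ) : ZMod d) * dch (Dl ζ ψ k) r = _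
      rw [dch_dl k r]
      simp only [Dl]
      rw [ZMod.val_natCast, zeta_pow_mod hd hζ, smul_mul_assoc, mul_smul_comm, smul_smul,
        show (ζ ^ r * ∏ t ∈ range r, ζ ^ t) = ∏ t ∈ range (r + 1), ζ ^ t by
          rw [prod_range_succ, mul_comm],
        show k + 1 - (r : ℕ) = (k - (r : ℕ)) + 1 by ring,
        ← listP_left ψ r (k - (r : ℕ)),
        show k - ((r : ℕ) : ZMod d) = k + 1 - ((r + 1 : ℕ) : ZMod d) by push_cast; ring]

theorem det_Tm [Nonempty ι] (h0 : Q) (hpsi : ∀ k', listP ψ d k' = h0 • 1) (k : ZMod d) :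
    (Tm ζ ψ a k).det
      = ((-1 : Q) ^ (d - 1) * ((∏ z : ZMod d, a z) + h0)) ^ (Fintype.card ι) := by
  have h1 : Tm ζ ψ a k = cyc (Dl ζ ψ k) (fun p => a (p + 1)) := rfl
  rw [h1, det_cyc hd (Dl ζ ψ k) (fun p => a (p + 1)), target]
  rw [dch_dl hd hζ k d, hpsi, zeta_pow_prod hd hζ]
  have hprod : ∏ t ∈ range d, a (((t : ℕ) : ZMod d) + 1) = ∏ z : ZMod d, a z := by
    rw [show (fun t : ℕ => a (((t : ℕ) : ZMod d) + 1)) = fun t : ℕ => a (1 + (t : ℕ)) from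
      funext fun t => by rw [add_comm]]
    exact prod_shift a 1
  rw [hprod]
  have hneg : (-(-1 : Q) ^ d) = (-1 : Q) ^ (d - 1) := by
    have hh : d = (d - 1) + 1 := by omega
    conv_lhs => rw [hh]
    rw [pow_succ]
    ring
  rw [hneg, smul_smul]
  have hcollect : ((-1 : Q) ^ (d - 1) * h0) • (1 : Matrix ι ι Q)
      + ((-1 : Q) ^ (d - 1) * ∏ z : ZMod d, a z) • 1
      = ((-1 : Q) ^ (d - 1) * ((∏ z : ZMod d, a z) + h0)) • 1 := by
    rw [← add_smul]
    ring_nf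
  rw [hcollect, Matrix.det_smul, Matrix.det_one, mul_one]

end withzeta2

end PartC

section PartD

variable {Q : Type*} [CommRing Q] {d : ℕ} [NeZero d] {ι : Type*} [Fintype ι] [DecidableEq ι]

lemma submatrix_smul_one {κ : Type*} [DecidableEq κ] (e : κ ≃ ι) (x : Q) :
    ((x • (1 : Matrix ι ι Q)).submatrix e e) = x • (1 : Matrix κ κ Q) := by
  ext p q
  simp [Matrix.submatrix_apply, Matrix.smul_apply, Matrix.one_apply, Equiv.apply_eq_iff_eq]

lemma ofFn_eq_listP (Φ : ZMod d → Matrix ι ι Q) :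
    ∀ (r : ℕ) (k : ZMod d),
      (List.ofFn fun i : Fin r => Φ (k + ((i : ℕ) : ZMod d))).prod = listP Φ r k
  | 0, k => by
      rw [List.ofFn_zero, List.prod_nil]
      rfl
  | r + 1, k => by
      rw [List.ofFn_succ', List.prod_concat]
      have hf : (fun i : Fin r => Φ (k + (((i.castSucc : Fin (r + 1)) : ℕ) : ZMod d)))
          = fun i : Fin r => Φ (k + ((i : ℕ) : ZMod d)) := by
        funext i
        rw [Fin.coe_castSucc]
      rw [hf, ofFn_eq_listP Φ r k]
      rfl

lemma cycProd_eq_listP (Φ : ZMod d → Matrix ι ι Q) (k : ZMod d) :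
    MF.cycProd Φ k = listP Φ d k :=
  ofFn_eq_listP Φ d k

lemma listP_submatrix {κ : Type*} [Fintype κ] [DecidableEq κ] (Φ : ZMod d → Matrix ι ι Q)
    (e : κ ≃ ι) : ∀ (r : ℕ) (k : ZMod d),
      listP (fun k' => (Φ k').submatrix e e) r k = (listP Φ r k).submatrix e e
  | 0, k => by
      show (1 : Matrix κ κ Q) = (1 : Matrix ι ι Q).submatrix e e
      rw [Matrix.submatrix_one_equiv]
  | r + 1, k => by
      show listP (fun k' => (Φ k').submatrix e e) r k * (Φ (k + (r : ℕ))).submatrix e e = _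
      rw [listP_submatrix Φ e r k, Matrix.submatrix_mul_equiv]
      rfl

lemma listP_scalar (c : ZMod d → Q) : ∀ (r : ℕ) (k : ZMod d),
    listP (fun k' => c k' • (1 : Matrix ι ι Q)) r k = (∏ t ∈ range r, c (k + (t : ℕ))) • 1
  | 0, k => by
      rw [range_zero, prod_empty, one_smul]
      rfl
  | r + 1, k => by
      show listP (fun k' => c k' • (1 : Matrix ι ι Q)) r k * (c (k + (r : ℕ)) • 1) = _
      rw [listP_scalar c r k, smul_mul_assoc, mul_smul_comm, smul_smul, one_mul,
        prod_range_succ]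

/-- map from `ZMod d` to `Fin d`. -/
def finOf : ZMod d → Fin d := fun z => ⟨z.val, ZMod.val_lt z⟩

lemma prod_finOf (G : Fin d → Q) : ∏ z : ZMod d, G (finOf z) = ∏ j : Fin d, G j := by
  apply Fintype.prod_bijective (finOf : ZMod d → Fin d) ?_ _ _ (fun z => rfl)
  constructor
  · intro z w h
    have : z.val = w.val := congrArg Fin.val h
    exact val_inj' this
  · intro j
    refine ⟨((j : ℕ) : ZMod d), ?_⟩
    apply Fin.ext
    show ((((j : ℕ) : ZMod d)).val : ℕ) = (j : ℕ)
    rw [ZMod.val_cast_of_lt j.isLt]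

section withzeta3

variable {ζ : Q} (hd : 2 ≤ d) (hζ : ∏ i ∈ range d, (X - C (ζ ^ i)) = X ^ d - 1)
include hd hζ

theorem aux_MF (I : Ideal Q) : ∀ (n : ℕ) (G : Fin (n + 1) → Fin d → Q),
    (∀ i j, G i j ∈ I) →
    ∃ ψ : ZMod d → Matrix (Fin (d ^ n)) (Fin (d ^ n)) Q,
      (∀ k, listP ψ d k = (∑ i : Fin (n + 1), ∏ j : Fin d, G i j) • 1) ∧
      (∀ k p q, ψ k p q ∈ I)
  | 0, G, hG => by
      refine ⟨fun k => G 0 (finOf k) • 1, fun k => ?_, fun k p q => ?_⟩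
      · rw [listP_scalar (fun z => G 0 (finOf z)) d k,
          prod_shift (fun z => G 0 (finOf z)) k, prod_finOf (G 0), Fin.sum_univ_one]
      · show (G 0 (finOf k) • (1 : Matrix (Fin (d ^ 0)) (Fin (d ^ 0)) Q)) p q ∈ I
        rw [Matrix.smul_apply, smul_eq_mul]
        exact Ideal.mul_mem_right _ _ (hG 0 _)
  | n + 1, G, hG => by
      obtain ⟨ψ, hψ1, hψ2⟩ := aux_MF I n (fun i => G i.succ) (fun i j => hG i.succ j)
      set a : ZMod d → Q := fun z => G 0 (finOf z) with ha
      set h0 : Q := ∑ i : Fin (n + 1), ∏ j : Fin d, G i.succ j with hh0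
      have e : Fin (d ^ (n + 1)) ≃ Fin (d ^ n) × ZMod d :=
        (finCongr (pow_succ d n)).trans
          (finProdFinEquiv.symm.trans
            (Equiv.prodCongr (Equiv.refl (Fin (d ^ n)))
              { toFun := fun i => ((i : ℕ) : ZMod d)
                invFun := finOf
                left_inv := fun i => Fin.ext (ZMod.val_cast_of_lt i.isLt)
                right_inv := fun z => natCast_val_self z }))
      refine ⟨fun k => (Tm ζ ψ a k).submatrix e e, fun k => ?_, fun k p q => ?_⟩
      · rw [listP_submatrix (Tm ζ ψ a) e d k, cycT hd hζ h0 hψ1 k]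
        have hg : ∏ z : ZMod d, a z = ∏ j : Fin d, G 0 j := prod_finOf (G 0)
        rw [hg, submatrix_smul_one e, Fin.sum_univ_succ]
      · show (Tm ζ ψ a k).submatrix e e p q ∈ I
        rw [Matrix.submatrix_apply]
        have hTm : ∀ x y : Fin (d ^ n) × ZMod d, Tm ζ ψ a k x y ∈ I := by
          intro x y
          rw [Tm, Matrix.add_apply]
          apply Ideal.add_mem
          · rw [Dm, blockDiagonal_apply]
            split
            · rw [Dl]
              simp only [Matrix.smul_apply, smul_eq_mul]
              exact Ideal.mul_mem_left _ _ (hψ2 _ _ _)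
            · exact Ideal.zero_mem I
          · rw [Am, offP, of_apply]
            split
            · exact hG 0 _
            · exact Ideal.zero_mem I
        exact hTm _ _

end withzeta3

end PartD

end MFaux

/-- if `f = ∑_{i=1}^N f_{i1}⋯f_{id}` with all `f_{ij}` in the maximal ideal,
then `f` admits a reduced `d`-fold matrix factorization of rank `d^{N-1}` whose matrices all
have determinant `± f^{d^{N-2}}` (Proposition 6.1). -/
theorem exists_reduced_MF_with_det {Q : Type*} [CommRing Q] [IsLocalRing Q]
    [IsNoetherianRing Q] (d N : ℕ) (hd : 2 ≤ d) (hN : 2 ≤ N) (ζ : Q)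
    (hζ : ∏ i ∈ Finset.range d, (Polynomial.X - Polynomial.C (ζ ^ i)) =
      Polynomial.X ^ d - 1)
    (f : Q) (hfm : f ∈ IsLocalRing.maximalIdeal Q) (hfnzd : f ∈ nonZeroDivisors Q)
    (F : Fin N → Fin d → Q) (hF : ∀ i j, F i j ∈ IsLocalRing.maximalIdeal Q)
    (hsum : f = ∑ i : Fin N, ∏ j : Fin d, F i j) :
    ∃ φ : ZMod d → Matrix (Fin (d ^ (N - 1))) (Fin (d ^ (N - 1))) Q,
      MF.IsMF d f φ ∧ MF.Reduced φ ∧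
      ∃ ε : Q, (ε = 1 ∨ ε = -1) ∧ ∀ k : ZMod d, (φ k).det = ε * f ^ d ^ (N - 2) := by
  haveI : NeZero d := ⟨by omega⟩
  obtain ⟨n, rfl⟩ : ∃ n, N = n + 2 := ⟨N - 2, by omega⟩
  obtain ⟨ψ, hψ1, hψ2⟩ := MFaux.aux_MF hd hζ (IsLocalRing.maximalIdeal Q) n
    (fun i => F i.succ) (fun i j => hF i.succ j)
  haveI : Nonempty (Fin (d ^ n)) := ⟨⟨0, by positivity⟩⟩
  set a : ZMod d → Q := fun z => F 0 (MFaux.finOf z) with ha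
  set h0 : Q := ∑ i : Fin (n + 1), ∏ j : Fin d, F i.succ j with hh0
  have e : Fin (d ^ (n + 2 - 1)) ≃ Fin (d ^ n) × ZMod d :=
    (finCongr (show d ^ (n + 2 - 1) = d ^ n * d by
        rw [show n + 2 - 1 = n + 1 by omega, pow_succ])).trans
      (finProdFinEquiv.symm.trans
        (Equiv.prodCongr (Equiv.refl (Fin (d ^ n)))
          { toFun := fun i => ((i : ℕ) : ZMod d)
            invFun := MFaux.finOf
            left_inv := fun i => Fin.ext (ZMod.val_cast_of_lt i.isLt)
            right_inv := fun z => MFaux.natCast_val_self z }))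
  have hg : ∏ z : ZMod d, a z = ∏ j : Fin d, F 0 j := MFaux.prod_finOf (F 0)
  have hf : (∏ j : Fin d, F 0 j) + h0 = f := by
    rw [hsum, Fin.sum_univ_succ]
  have hTm : ∀ (k : ZMod d) (x y : Fin (d ^ n) × ZMod d),
      MFaux.Tm ζ ψ a k x y ∈ IsLocalRing.maximalIdeal Q := by
    intro k x y
    rw [MFaux.Tm, Matrix.add_apply]
    apply Ideal.add_mem
    · rw [MFaux.Dm, Matrix.blockDiagonal_apply]
      split
      · rw [MFaux.Dl]
        simp only [Matrix.smul_apply, smul_eq_mul]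
        exact Ideal.mul_mem_left _ _ (hψ2 _ _ _)
      · exact Ideal.zero_mem _
    · rw [MFaux.Am, MFaux.offP, Matrix.of_apply]
      split
      · exact hF 0 _
      · exact Ideal.zero_mem _
  refine ⟨fun k => (MFaux.Tm ζ ψ a k).submatrix e e, ?_, ?_, ?_⟩
  · intro k
    rw [MFaux.cycProd_eq_listP, MFaux.listP_submatrix (MFaux.Tm ζ ψ a) e d k,
      MFaux.cycT hd hζ h0 hψ1 k, hg, hf, MFaux.submatrix_smul_one e]
  · intro k p q
    show (MFaux.Tm ζ ψ a k).submatrix e e p q ∈ IsLocalRing.maximalIdeal Q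
    rw [Matrix.submatrix_apply]
    exact hTm k _ _
  · refine ⟨((-1 : Q) ^ (d - 1)) ^ (d ^ n), ?_, ?_⟩
    · rw [← pow_mul]
      rcases Nat.even_or_odd ((d - 1) * d ^ n) with he | ho
      · left
        exact he.neg_one_pow
      · right
        exact ho.neg_one_pow
    · intro k
      show ((MFaux.Tm ζ ψ a k).submatrix e e).det = _
      rw [Matrix.det_submatrix_equiv_self e, MFaux.det_Tm hd hζ h0 hψ1 k, hg, hf,
        mul_pow, Fintype.card_fin]
      rfl
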